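/- Conversely, in the same setting: if x solves (A − A₁)x = y and additionally hᵢ*(x) = 0 for i = 1,…,n, then y satisfies the solvability conditions xᵢ⁰*(y) = 0 for all i, and x solves Ax = y. -/

import Mathlib

open Submodule

noncomputable section

/-- Finite-dimensional perturbation theorem (converse part): if `x` solves the perturbed
equation `(A − A₁)x = y` and additionally `hᵢ*(x) = 0` for all `i`, then `y` satisfies the
solvability conditions `x⁰ᵢ*(y) = 0` and `x` solves `Ax = y`. -/
theorem finite_dim_perturbation_converse
    {B₁ B₂ : Type*}
    [NormedAddCommGroup B₁] [NormedSpace ℝ B₁] [CompleteSpace B₁]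
    [NormedAddCommGroup B₂] [NormedSpace ℝ B₂] [CompleteSpace B₂]
    (A : B₁ →L[ℝ] B₂) (n : ℕ)
    (x0 : Fin n → B₁) (xs : Fin n → (B₂ →L[ℝ] ℝ))
    (hx0li : LinearIndependent ℝ x0)
    (hker : LinearMap.ker (A : B₁ →ₗ[ℝ] B₂) = Submodule.span ℝ (Set.range x0))
    (hxsli : LinearIndependent ℝ xs)
    (hxsker : ∀ i, (xs i).comp A = 0)
    (hxsspan : ∀ f : B₂ →L[ℝ] ℝ, f.comp A = 0 → f ∈ Submodule.span ℝ (Set.range xs))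
    (hclosed : IsClosed (LinearMap.range (A : B₁ →ₗ[ℝ] B₂) : Set B₂))
    (hrange : LinearMap.range (A : B₁ →ₗ[ℝ] B₂) = ⨅ i : Fin n, LinearMap.ker (xs i : B₂ →ₗ[ℝ] ℝ))
    (hs : Fin n → (B₁ →L[ℝ] ℝ)) (h : Fin n → B₂)
    (hdet1 : Matrix.det (Matrix.of fun i j => (hs i) (x0 j)) ≠ 0)
    (hdet2 : Matrix.det (Matrix.of fun i j => (xs i) (h j)) ≠ 0)
    (y : B₂)
    (x : B₁) (hx : A x - ∑ i, (hs i) x • h i = y)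
    (hhx : ∀ i, (hs i) x = 0) :
    (∀ i, (xs i) y = 0) ∧ A x = y := by
  have hAx : A x = y := by
    rw [← hx]
    simp [hhx]
  refine ⟨fun i => ?_, hAx⟩
  have := congrFun (congrArg DFunLike.coe (hxsker i)) x
  simpa [hAx] using this
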